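/- Let φ = (1−√5)/2 and let f₁, f₂ ∈ ℚ[[z]] be the generating series of the sequence aₙ (aₙ = parity of the number of 2's in base-3 expansion of n) and of 1−aₙ respectively; both converge on |z| < 1. Using the functional system (f₁(z),f₂(z))ᵀ = A(z)(f₁(z³),f₂(z³))ᵀ with A(z)=[[1+z,z²],[z²,1+z]] and the relation f₁+f₂ = 1/(1−z), prove: f₁(φ) = f₂(φ) and consequently f₁(φ) = −φ/2 ∈ ℚ(√5). -/

import Mathlib

/-- `aSeq n = 1` iff the base-3 expansion of `n` contains an odd number of digits `2`. -/
def aSeq (n : ℕ) : ℕ := ((Nat.digits 3 n).count 2) % 2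

open scoped Real

lemma aSeq_lt_two (n : ℕ) : aSeq n < 2 := Nat.mod_lt _ (by norm_num)

lemma aSeq_mul3 (m : ℕ) : aSeq (3 * m) = aSeq m := by
  rcases Nat.eq_zero_or_pos m with h | h
  · simp [h]
  · unfold aSeq
    rw [Nat.digits_def' (by norm_num) (by omega)]
    simp [Nat.mul_div_cancel_left, Nat.mul_mod_right]

lemma aSeq_mul3_add1 (m : ℕ) : aSeq (3 * m + 1) = aSeq m := by
  unfold aSeq
  rw [Nat.digits_def' (by norm_num) (by omega)]
  have h1 : (3 * m + 1) % 3 = 1 := by omega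
  have h2 : (3 * m + 1) / 3 = m := by omega
  simp [h1, h2]

lemma aSeq_mul3_add2 (m : ℕ) : (aSeq (3 * m + 2) : ℝ) = 1 - aSeq m := by
  unfold aSeq
  rw [Nat.digits_def' (by norm_num) (by omega)]
  have h1 : (3 * m + 2) % 3 = 2 := by omega
  have h2 : (3 * m + 2) / 3 = m := by omega
  rw [h1, h2, List.count_cons_self]
  have := Nat.mod_two_eq_zero_or_one ((Nat.digits 3 m).count 2)
  rcases this with h | h <;> rw [Nat.add_mod, h] <;> push_cast [h] <;> norm_num


lemma tsum_triple {f : ℕ → ℝ} (hf : Summable f) :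
    (∑' n, f n) = ∑' m : ℕ, (f (3 * m) + f (3 * m + 1) + f (3 * m + 2)) := by
  have e : ℕ × Fin 3 ≃ ℕ := (Nat.divModEquiv 3).symm
  have h1 : (∑' n : ℕ, f n) = ∑' p : ℕ × Fin 3, f ((Nat.divModEquiv 3).symm p) :=
    ((Nat.divModEquiv 3).symm.tsum_eq f).symm
  have hs : Summable (fun p : ℕ × Fin 3 => f ((Nat.divModEquiv 3).symm p)) :=
    (Nat.divModEquiv 3).symm.summable_iff.mpr hf
  rw [h1, Summable.tsum_prod hs]
  congr 1; funext m
  rw [tsum_fintype, Fin.sum_univ_three]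
  have he : ∀ r : Fin 3, (Nat.divModEquiv 3).symm (m, r) = m * 3 + (r : ℕ) := fun r => rfl
  simp only [he]
  norm_num [Nat.mul_comm]

/-- At the point `φ = (1−√5)/2` of the open unit disc one has `f₁(φ) = f₂(φ)`, and
consequently `f₁(φ) = −φ/2 ∈ ℚ(√5)`, where `f₁, f₂` are the generating series of the
sequences `aSeq` and `1 − aSeq`. -/
theorem value_at_golden_conjugate :
    (∑' n : ℕ, (aSeq n : ℝ) * ((1 - Real.sqrt 5) / 2) ^ n) =
      (∑' n : ℕ, ((1 : ℝ) - (aSeq n : ℝ)) * ((1 - Real.sqrt 5) / 2) ^ n) ∧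
    (∑' n : ℕ, (aSeq n : ℝ) * ((1 - Real.sqrt 5) / 2) ^ n) =
      -((1 - Real.sqrt 5) / 2) / 2 := by
  set φ : ℝ := (1 - Real.sqrt 5) / 2 with hφdef
  have hs5 : Real.sqrt 5 ^ 2 = 5 := Real.sq_sqrt (by norm_num)
  have hs5lt : Real.sqrt 5 < 3 := by nlinarith [Real.sqrt_nonneg 5]
  have hs5gt : (2 : ℝ) < Real.sqrt 5 := by nlinarith [Real.sqrt_nonneg 5]
  have hφ1 : ‖φ‖ < 1 := by
    rw [Real.norm_eq_abs, abs_lt]; constructor <;> [skip; skip] <;>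
      simp only [hφdef] <;> nlinarith
  have hsq : φ ^ 2 = φ + 1 := by
    simp only [hφdef]; nlinarith
  -- summability of bounded-coefficient series
  have hgeo : Summable (fun n : ℕ => ‖φ‖ ^ n) := summable_geometric_of_lt_one (by positivity) hφ1
  have hbound : ∀ (c : ℕ → ℝ), (∀ n, |c n| ≤ 1) → Summable (fun n => c n * φ ^ n) := by
    intro c hc
    refine Summable.of_norm_bounded hgeo ?_
    intro n
    rw [norm_mul, norm_pow]
    calc ‖c n‖ * ‖φ‖ ^ n ≤ 1 * ‖φ‖ ^ n := by
          apply mul_le_mul_of_nonneg_right (hc n) (by positivity)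
      _ = ‖φ‖ ^ n := one_mul _
  have ha_le : ∀ n, (aSeq n : ℝ) = 0 ∨ (aSeq n : ℝ) = 1 := by
    intro n
    have := aSeq_lt_two n
    interval_cases h : aSeq n <;> simp
  have hsum_a : Summable (fun n => (aSeq n : ℝ) * φ ^ n) := by
    apply hbound; intro n; rcases ha_le n with h | h <;> rw [h] <;> norm_num
  have hsum_one : Summable (fun n : ℕ => φ ^ n) := summable_geometric_of_norm_lt_one hφ1
  have hsum_c : Summable (fun n => ((1:ℝ) - (aSeq n : ℝ)) * φ ^ n) := by
    apply hbound; intro n; rcases ha_le n with h | h <;> rw [h] <;> norm_num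
  -- the difference series
  set b : ℕ → ℝ := fun n => 2 * (aSeq n : ℝ) - 1 with hbdef
  have hsum_b : Summable (fun n => b n * φ ^ n) := by
    apply hbound; intro n; rcases ha_le n with h | h <;> simp [hbdef, h] <;> norm_num
  -- key: ∑ b n φ^n = 0
  have hkey : (∑' n : ℕ, b n * φ ^ n) = 0 := by
    rw [tsum_triple hsum_b]
    have hinner : ∀ m : ℕ, (b (3 * m) * φ ^ (3 * m) + b (3 * m + 1) * φ ^ (3 * m + 1)
        + b (3 * m + 2) * φ ^ (3 * m + 2)) = 0 := by
      intro m
      have e0 : b (3 * m) = b m := by simp [hbdef, aSeq_mul3]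
      have e1 : b (3 * m + 1) = b m := by simp [hbdef, aSeq_mul3_add1]
      have e2 : b (3 * m + 2) = - b m := by
        simp only [hbdef, aSeq_mul3_add2]; ring
      rw [e0, e1, e2]
      have p1 : φ ^ (3 * m + 1) = φ ^ (3 * m) * φ := by ring
      have p2 : φ ^ (3 * m + 2) = φ ^ (3 * m) * φ ^ 2 := by ring
      rw [p1, p2, hsq]
      ring
    simp only [hinner]
    exact tsum_zero
  -- conclusion
  have hdiff : (∑' n : ℕ, (aSeq n : ℝ) * φ ^ n) - (∑' n : ℕ, ((1:ℝ) - (aSeq n : ℝ)) * φ ^ n)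
      = ∑' n : ℕ, b n * φ ^ n := by
    rw [← Summable.tsum_sub hsum_a hsum_c]
    congr 1; funext n; simp only [hbdef]; ring
  have heq : (∑' n : ℕ, (aSeq n : ℝ) * φ ^ n) = ∑' n : ℕ, ((1:ℝ) - (aSeq n : ℝ)) * φ ^ n := by
    have := hdiff.trans hkey
    linarith
  refine ⟨heq, ?_⟩
  have hsumtot : (∑' n : ℕ, (aSeq n : ℝ) * φ ^ n) + (∑' n : ℕ, ((1:ℝ) - (aSeq n : ℝ)) * φ ^ n)
      = ∑' n : ℕ, φ ^ n := by
    rw [← Summable.tsum_add hsum_a hsum_c]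
    congr 1; funext n; ring
  have hgeoval : (∑' n : ℕ, φ ^ n) = (1 - φ)⁻¹ := tsum_geometric_of_norm_lt_one hφ1
  have hφne : (1 - φ) ≠ 0 := by
    simp only [hφdef]; intro h; nlinarith
  have hval : (1 - φ)⁻¹ = -φ := by
    field_simp
    nlinarith
  rw [← heq] at hsumtot
  rw [hgeoval, hval] at hsumtot
  linarith
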